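/- If S is a geodetic set of G ⊠ H, then the projection of S onto G is a geodetic set of G or the projection of S onto H is a geodetic set of H. -/

import Mathlib

open SimpleGraph

/-- The strong product of two simple graphs. -/
def strongProd {α β : Type*} (G : SimpleGraph α) (H : SimpleGraph β) :
    SimpleGraph (α × β) where
  Adj x y := x ≠ y ∧ (x.1 = y.1 ∨ G.Adj x.1 y.1) ∧ (x.2 = y.2 ∨ H.Adj x.2 y.2)
  symm := by
    constructor
    rintro x y ⟨hne, h1, h2⟩
    exact ⟨hne.symm, h1.imp Eq.symm G.adj_symm, h2.imp Eq.symm H.adj_symm⟩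
  loopless := by constructor; rintro x ⟨hne, -, -⟩; exact hne rfl

/-- The closed geodesic interval between two vertices. -/
def interval {V : Type*} (G : SimpleGraph V) (u v : V) : Set V :=
  {w | G.dist u w + G.dist w v = G.dist u v}

/-- The geodetic closure of a set of vertices. -/
def intervalSet {V : Type*} (G : SimpleGraph V) (S : Set V) : Set V :=
  ⋃ u ∈ S, ⋃ v ∈ S, interval G u v

/-- A set is geodetic if its geodetic closure is the whole vertex set. -/
def IsGeodetic {V : Type*} (G : SimpleGraph V) (S : Set V) : Prop :=
  intervalSet G S = Set.univ

/-- A set is a hull set if iterating the interval operator yields everything. -/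
def IsHullSet {V : Type*} (G : SimpleGraph V) (S : Set V) : Prop :=
  ∃ r : ℕ, (intervalSet G)^[r] S = Set.univ

/-- The geodetic number. -/
noncomputable def geodeticNumber {V : Type*} (G : SimpleGraph V) : ℕ :=
  sInf {n : ℕ | ∃ S : Set V, S.ncard = n ∧ IsGeodetic G S}

/-- The hull number. -/
noncomputable def hullNumber {V : Type*} (G : SimpleGraph V) : ℕ :=
  sInf {n : ℕ | ∃ S : Set V, S.ncard = n ∧ IsHullSet G S}

/-- A vertex is simplicial if its neighborhood induces a complete graph. -/
def IsSimplicial {V : Type*} (G : SimpleGraph V) (v : V) : Prop :=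
  ∀ ⦃a b : V⦄, G.Adj v a → G.Adj v b → a ≠ b → G.Adj a b

section Aux
variable {α β : Type*} {G : SimpleGraph α} {H : SimpleGraph β}

lemma strongProd_connected (hG : G.Connected) (hH : H.Connected) :
    (strongProd G H).Connected := by
  have hne : Nonempty (α × β) := ⟨hG.nonempty.some, hH.nonempty.some⟩
  rw [connected_iff]
  refine ⟨fun x y => ?_, hne⟩
  have r1 : (strongProd G H).Reachable (x.1, x.2) (y.1, x.2) :=
    Reachable.map (⟨fun g => (g, x.2), fun hab =>
      ⟨by simp [hab.ne], Or.inr hab, Or.inl rfl⟩⟩ : G →g strongProd G H) (hG x.1 y.1)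
  have r2 : (strongProd G H).Reachable (y.1, x.2) (y.1, y.2) :=
    Reachable.map (⟨fun h => (y.1, h), fun hab =>
      ⟨by simp [hab.ne], Or.inl rfl, Or.inr hab⟩⟩ : H →g strongProd G H) (hH x.2 y.2)
  exact (r1.trans r2)

lemma fst_dist_le_length (hG : G.Connected) {x y : α × β}
    (p : (strongProd G H).Walk x y) : G.dist x.1 y.1 ≤ p.length := by
  induction p with
  | nil => simp
  | @cons a b c hadj q ih =>
    obtain ⟨-, h1, -⟩ := hadj
    change _ ≤ q.length + 1
    rcases h1 with heq | hadj'
    · rw [heq]; omega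
    · calc G.dist a.1 c.1 ≤ G.dist a.1 b.1 + G.dist b.1 c.1 := hG.dist_triangle
        _ ≤ q.length + 1 := by
            have := dist_le hadj'.toWalk
            simp at this; omega

lemma snd_dist_le_length (hH : H.Connected) {x y : α × β}
    (p : (strongProd G H).Walk x y) : H.dist x.2 y.2 ≤ p.length := by
  induction p with
  | nil => simp
  | @cons a b c hadj q ih =>
    obtain ⟨-, -, h2⟩ := hadj
    change _ ≤ q.length + 1
    rcases h2 with heq | hadj'
    · rw [heq]; omega
    · calc H.dist a.2 c.2 ≤ H.dist a.2 b.2 + H.dist b.2 c.2 := hH.dist_triangle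
        _ ≤ q.length + 1 := by
            have := dist_le hadj'.toWalk
            simp at this; omega

lemma step_lemma {V : Type*} (K : SimpleGraph V) (a b : V) (n : ℕ) (hK : K.Connected)
    (hd : K.dist a b ≤ n + 1) : ∃ c, (a = c ∨ K.Adj a c) ∧ K.dist c b ≤ n := by
  obtain ⟨p, hp⟩ := (hK a b).exists_walk_length_eq_dist
  cases p with
  | nil =>
    refine ⟨a, Or.inl rfl, ?_⟩
    simp at hp
    simp
  | @cons _ c _ hadj q =>
    refine ⟨c, Or.inr hadj, ?_⟩
    have := dist_le q
    simp [Walk.length_cons] at hp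
    omega

lemma dist_le_max (hG : G.Connected) (hH : H.Connected) :
    ∀ (n : ℕ) (g1 g2 : α) (h1 h2 : β), G.dist g1 g2 ≤ n → H.dist h1 h2 ≤ n →
      (strongProd G H).dist (g1, h1) (g2, h2) ≤ n := by
  have Pconn := strongProd_connected hG hH
  intro n
  induction n with
  | zero =>
    intro g1 g2 h1 h2 hg hh
    have : g1 = g2 := (hG.dist_eq_zero_iff).mp (Nat.le_zero.mp hg)
    have : h1 = h2 := (hH.dist_eq_zero_iff).mp (Nat.le_zero.mp hh)
    subst_vars
    simp
  | succ n ih =>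
    intro g1 g2 h1 h2 hg hh
    obtain ⟨g', hg', hgd⟩ := step_lemma G g1 g2 n hG hg
    obtain ⟨h', hh', hhd⟩ := step_lemma H h1 h2 n hH hh
    by_cases hcase : g1 = g' ∧ h1 = h'
    · obtain ⟨rfl, rfl⟩ := hcase
      exact le_trans (ih g1 g2 h1 h2 hgd hhd) (Nat.le_succ n)
    · have hne : (g1, h1) ≠ (g', h') := by
        intro heq
        exact hcase ⟨congrArg Prod.fst heq, congrArg Prod.snd heq⟩
      have hadj : (strongProd G H).Adj (g1, h1) (g', h') := ⟨hne, hg', hh'⟩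
      obtain ⟨p, hp⟩ := (Pconn (g', h') (g2, h2)).exists_walk_length_eq_dist
      have := dist_le (Walk.cons hadj p)
      have := ih g' g2 h' h2 hgd hhd
      simp [Walk.length_cons] at *
      omega

end Aux

theorem strongProd_geodetic_projection {α β : Type*} [Fintype α] [Fintype β]
    (G : SimpleGraph α) (H : SimpleGraph β) (hG : G.Connected) (hH : H.Connected)
    (S : Set (α × β)) (hS : IsGeodetic (strongProd G H) S) :
    IsGeodetic G (Prod.fst '' S) ∨ IsGeodetic H (Prod.snd '' S) := by
  by_cases hA : IsGeodetic G (Prod.fst '' S)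
  · exact Or.inl hA
  right
  have Pconn := strongProd_connected hG hH
  rw [IsGeodetic, Set.eq_univ_iff_forall] at hA
  push_neg at hA
  obtain ⟨g, hg⟩ := hA
  rw [IsGeodetic, Set.eq_univ_iff_forall]
  intro h
  have hgh : (g, h) ∈ intervalSet (strongProd G H) S := hS ▸ Set.mem_univ _
  simp only [intervalSet, Set.mem_iUnion] at hgh
  obtain ⟨u, hu, v, hv, hmem⟩ := hgh
  have key : (strongProd G H).dist u (g, h) + (strongProd G H).dist (g, h) v
      = (strongProd G H).dist u v := hmem
  obtain ⟨p, hp⟩ := (Pconn u (g, h)).exists_walk_length_eq_dist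
  obtain ⟨q, hq⟩ := (Pconn (g, h) v).exists_walk_length_eq_dist
  have ha1 : G.dist u.1 g ≤ (strongProd G H).dist u (g, h) := hp ▸ fst_dist_le_length hG p
  have hb1 : H.dist u.2 h ≤ (strongProd G H).dist u (g, h) := hp ▸ snd_dist_le_length hH p
  have ha2 : G.dist g v.1 ≤ (strongProd G H).dist (g, h) v := hq ▸ fst_dist_le_length hG q
  have hb2 : H.dist h v.2 ≤ (strongProd G H).dist (g, h) v := hq ▸ snd_dist_le_length hH q
  have hmax : (strongProd G H).dist u v ≤ max (G.dist u.1 v.1) (H.dist u.2 v.2) :=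
    dist_le_max hG hH _ u.1 v.1 u.2 v.2 (le_max_left _ _) (le_max_right _ _)
  have htriG : G.dist u.1 v.1 ≤ G.dist u.1 g + G.dist g v.1 := hG.dist_triangle
  have htriH : H.dist u.2 v.2 ≤ H.dist u.2 h + H.dist h v.2 := hH.dist_triangle
  have hnotg : G.dist u.1 g + G.dist g v.1 ≠ G.dist u.1 v.1 := by
    intro heq
    apply hg
    simp only [intervalSet, Set.mem_iUnion]
    exact ⟨u.1, ⟨u, hu, rfl⟩, v.1, ⟨v, hv, rfl⟩, heq⟩
  have hB : H.dist u.2 h + H.dist h v.2 = H.dist u.2 v.2 := by omega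
  simp only [intervalSet, Set.mem_iUnion]
  exact ⟨u.2, ⟨u, hu, rfl⟩, v.2, ⟨v, hv, rfl⟩, hB⟩
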